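/- For every n ≥ 1, the identity ∑_{i=n}^{2n−1} ((−1)^{n+i}/i) · C(i,n) · C(3n, i+1+n) = C(2n,n)/(n+1) holds in the rational numbers. -/

import Mathlib

open PowerSeries Finset

set_option maxRecDepth 8000

lemma coeff_one_sub_pow (m d : ℕ) :
    (PowerSeries.coeff d) ((1 - PowerSeries.X) ^ m) = (-1 : ℚ) ^ d * m.choose d := by
  have h : ((1 : ℚ⟦X⟧) - X) ^ m
      = ∑ k ∈ Finset.range (m + 1),
          (-X) ^ k * (1 : ℚ⟦X⟧) ^ (m - k) * ((m.choose k : ℕ) : ℚ⟦X⟧) := by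
    rw [sub_eq_add_neg, add_comm]
    exact add_pow _ _ _
  have hterm : ∀ k ∈ Finset.range (m+1),
      (PowerSeries.coeff d) ((-X : ℚ⟦X⟧)^k * (1:ℚ⟦X⟧)^(m-k) * ((m.choose k : ℕ) : ℚ⟦X⟧))
        = if d = k then (-1:ℚ)^k * m.choose k else 0 := by
    intro k _
    have h2 : ((-X : ℚ⟦X⟧)^k * (1:ℚ⟦X⟧)^(m-k) * ((m.choose k : ℕ) : ℚ⟦X⟧))
        = PowerSeries.C ((-1)^k * (m.choose k : ℚ)) * X^k := by
      rw [neg_pow, one_pow]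
      simp only [map_mul, map_pow, map_neg, map_one, map_natCast]
      ring
    rw [h2, PowerSeries.coeff_C_mul, PowerSeries.coeff_X_pow]
    split <;> simp
  rw [h, map_sum, Finset.sum_congr rfl hterm, Finset.sum_ite_eq]
  rcases lt_or_ge d (m+1) with hd | hd
  · simp [Finset.mem_range.2 hd]
  · have : m.choose d = 0 := Nat.choose_eq_zero_of_lt (by omega)
    simp [this, Finset.mem_range, Nat.not_lt.2 hd]

lemma key_sum (n : ℕ) (hn : 1 ≤ n) :
    ∑ j ∈ Finset.range n,
        (-1 : ℚ) ^ j * ((3*n).choose j) * ((n - 1 + (n - 1 - j)).choose (n-1))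
      = (-1 : ℚ) ^ (n-1) * ((2*n).choose (n-1)) := by
  have hinv : (invOneSubPow ℚ n).inv = ((1 : ℚ⟦X⟧) - X) ^ n :=
    invOneSubPow_inv_eq_one_sub_pow ℚ n
  have h1 : ((1 : ℚ⟦X⟧) - X) ^ (2*n)
      = ((1 : ℚ⟦X⟧) - X) ^ (3*n) * (invOneSubPow ℚ n).val := by
    have h3 : (3:ℕ)*n = 2*n + n := by ring
    rw [h3, pow_add, mul_assoc, ← hinv, Units.inv_eq_val_inv, Units.inv_mul, mul_one]
  have h2 := congrArg (PowerSeries.coeff (R := ℚ) (n-1)) h1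
  rw [coeff_one_sub_pow, PowerSeries.coeff_mul,
    Finset.Nat.sum_antidiagonal_eq_sum_range_succ_mk] at h2
  have h4 : (n - 1).succ = n := Nat.succ_pred_eq_of_pos hn
  rw [h4] at h2
  rw [h2]
  apply Finset.sum_congr rfl
  intro j hj
  rw [coeff_one_sub_pow, invOneSubPow_val_eq_mk_sub_one_add_choose_of_pos ℚ n hn,
    PowerSeries.coeff_mk]

/-- For every `n ≥ 1`,
`∑_{i=n}^{2n-1} ((-1)^{n+i}/i) C(i,n) C(3n, i+1+n) = C(2n,n)/(n+1)` in `ℚ`. -/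
theorem alternating_sum_eq_catalan (n : ℕ) (hn : 1 ≤ n) :
    ∑ i ∈ Finset.Icc n (2 * n - 1),
        (-1 : ℚ) ^ (n + i) / (i : ℚ) * (Nat.choose i n : ℚ) *
          (Nat.choose (3 * n) (i + 1 + n) : ℚ)
      = (Nat.choose (2 * n) n : ℚ) / ((n : ℚ) + 1) := by
  have hn0 : (n : ℚ) ≠ 0 := Nat.cast_ne_zero.2 (by omega)
  have hstep : ∑ i ∈ Finset.Icc n (2 * n - 1),
        (-1 : ℚ) ^ (n + i) / (i : ℚ) * (Nat.choose i n : ℚ) *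
          (Nat.choose (3 * n) (i + 1 + n) : ℚ)
      = ∑ j ∈ Finset.range n,
        ((-1 : ℚ) ^ (n-1) / n) *
          ((-1 : ℚ) ^ j * ((3*n).choose j) * ((n - 1 + (n - 1 - j)).choose (n-1))) := by
    refine Finset.sum_nbij' (fun i => 2*n - 1 - i) (fun j => 2*n - 1 - j)
      ?_ ?_ ?_ ?_ ?_
    · intro a ha; simp only [Finset.mem_Icc] at ha; simp only [Finset.mem_range]; omega
    · intro a ha; simp only [Finset.mem_range] at ha; simp only [Finset.mem_Icc]; omega
    · intro a ha; simp only [Finset.mem_Icc] at ha; show 2*n-1-(2*n-1-a) = a; omega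
    · intro a ha; simp only [Finset.mem_range] at ha; show 2*n-1-(2*n-1-a) = a; omega
    · intro i hi
      simp only [Finset.mem_Icc] at hi
      obtain ⟨h1, h2⟩ := hi
      show _ = ((-1 : ℚ) ^ (n-1) / n) *
          ((-1 : ℚ) ^ (2*n-1-i) * ((3*n).choose (2*n-1-i)) *
            ((n - 1 + (n - 1 - (2*n-1-i))).choose (n-1)))
      set j := 2*n - 1 - i with hj
      have hi0 : (i : ℚ) ≠ 0 := Nat.cast_ne_zero.2 (by omega)
      have hc1 : (3*n).choose (i + 1 + n) = (3*n).choose j := by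
        have h3 : i + 1 + n = 3*n - j := by omega
        rw [h3, Nat.choose_symm (by omega)]
      have hc2 : n * i.choose n = i * (i-1).choose (n-1) := by
        have e1 : i = (i-1) + 1 := by omega
        have e2 : n = (n-1) + 1 := by omega
        calc n * i.choose n = ((i-1)+1).choose ((n-1)+1) * ((n-1)+1) := by
              rw [← e1, ← e2]; ring
          _ = (i-1).succ * (i-1).choose (n-1) := by
              rw [← Nat.add_one_mul_choose_eq]
          _ = i * (i-1).choose (n-1) := by rw [Nat.succ_eq_add_one, ← e1]
      have hc3 : n - 1 + (n - 1 - j) = i - 1 := by omega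
      have hs : (-1 : ℚ) ^ (n + i) = (-1 : ℚ) ^ (n-1) * (-1 : ℚ) ^ j := by
        have he : n + i = (n-1) + j + 2*(n-j) := by omega
        rw [he, pow_add, pow_add, pow_mul]
        norm_num
      have hcast : (n : ℚ) * (i.choose n : ℚ) = (i : ℚ) * (((i-1)).choose (n-1) : ℚ) := by
        exact_mod_cast congrArg (Nat.cast : ℕ → ℚ) hc2
      rw [hs, hc1, hc3]
      field_simp
      linear_combination ((((3*n).choose j : ℕ) : ℚ)) * hcast
  rw [hstep, ← Finset.mul_sum, key_sum n hn]
  have hsq : (-1 : ℚ) ^ (n-1) * (-1 : ℚ) ^ (n-1) = 1 := by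
    rw [← pow_add]
    exact Even.neg_one_pow ⟨n-1, rfl⟩
  have h5 : (2*n).choose n * n = (2*n).choose (n-1) * (n+1) := by
    have e2 : n = (n-1) + 1 := by omega
    have h6 := Nat.choose_succ_right_eq (2*n) (n-1)
    rw [← e2] at h6
    have e3 : 2*n - (n-1) = n+1 := by omega
    rw [e3] at h6
    omega
  have hfin : ((2*n).choose (n-1) : ℚ) * ((n:ℚ)+1) = ((2*n).choose n : ℚ) * n := by
    have h7 := congrArg (Nat.cast : ℕ → ℚ) h5
    push_cast at h7
    linarith
  rw [div_mul_eq_mul_div, div_eq_div_iff hn0 (by positivity)]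
  linear_combination ((((2*n).choose (n-1) : ℕ) : ℚ) * ((n:ℚ)+1)) * hsq + hfin
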